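/- Assume there is c > 0 such that Re⟨B₀φ, φ⟩ ≥ c‖φ‖² for all φ ∈ dom(D₀) ∩ dom(A) and Re⟨𝓜*(D₀*ψ) + 𝓝*ψ + A*ψ, ψ⟩ ≥ c‖ψ‖² for all ψ ∈ dom(D₀*) ∩ dom(A*). Then the adjoint B₀* of B₀ satisfies Re⟨B₀* f, f⟩ ≥ c‖f‖² for every f ∈ dom(B₀*); in particular B₀* is injective. -/

import Mathlib

open Filter

/-- The operator `B₀` with domain `dom D₀ ⊓ dom A`, `B₀ u = D₀(𝓜 u) + 𝓝 u + A u`. -/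
noncomputable def B0 {K : Type*} [NormedAddCommGroup K] [InnerProductSpace ℂ K]
    (D₀ A : K →ₗ.[ℂ] K) (Mc N : K →L[ℂ] K)
    (hM : ∀ u ∈ D₀.domain, Mc u ∈ D₀.domain) : K →ₗ.[ℂ] K where
  domain := D₀.domain ⊓ A.domain
  toFun :=
    D₀.toFun.comp (LinearMap.codRestrict D₀.domain
        ((Mc : K →ₗ[ℂ] K).comp (D₀.domain ⊓ A.domain).subtype)
        (fun u => hM _ (Submodule.mem_inf.mp u.2).1))
    + (N : K →ₗ[ℂ] K).comp (D₀.domain ⊓ A.domain).subtype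
    + A.toFun.comp (Submodule.inclusion inf_le_right)


section helpers
variable {K : Type*} [NormedAddCommGroup K] [InnerProductSpace ℂ K] [CompleteSpace K]

lemma B0_apply (D₀ A : K →ₗ.[ℂ] K) (Mc N : K →L[ℂ] K)
    (hM : ∀ u ∈ D₀.domain, Mc u ∈ D₀.domain) (u : K) (hu : u ∈ D₀.domain ⊓ A.domain) :
    B0 D₀ A Mc N hM ⟨u, hu⟩
      = D₀ ⟨Mc u, hM u (Submodule.mem_inf.mp hu).1⟩ + N u
        + A ⟨u, (Submodule.mem_inf.mp hu).2⟩ := rfl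

lemma inner_real_smul_right (x y : K) (r : ℝ) :
    (inner ℂ x (r • y) : ℂ) = (r : ℂ) * inner ℂ x y := by
  rw [RCLike.real_smul_eq_coe_smul (K := ℂ), inner_smul_right]; norm_cast

lemma inner_real_smul_left (x y : K) (r : ℝ) :
    (inner ℂ (r • x) y : ℂ) = (r : ℂ) * inner ℂ x y := by
  rw [RCLike.real_smul_eq_coe_smul (K := ℂ), inner_smul_left, RCLike.conj_ofReal]; norm_cast

end helpers

set_option maxHeartbeats 1000000 in
theorem stmt15
    {K : Type*} [NormedAddCommGroup K] [InnerProductSpace ℂ K] [CompleteSpace K]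
    (D₀ : K →ₗ.[ℂ] K) (hD₀dense : Dense (D₀.domain : Set K)) (hD₀closed : D₀.IsClosed)
    (R : ℝ → K →L[ℂ] K)
    (hRdom : ∀ ε, 0 < ε → ∀ x : K, R ε x ∈ D₀.domain)
    (hRval : ∀ ε (hε : 0 < ε) (x : K),
      D₀ ⟨R ε x, hRdom ε hε x⟩ = ε⁻¹ • (x - R ε x))
    (hRinv : ∀ ε, 0 < ε → ∀ u : D₀.domain, R ε ((u : K) + ε • D₀ u) = u)
    (hRnorm : ∀ ε, 0 < ε → ‖R ε‖ ≤ 1)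
    (hRtendsto : ∀ x : K, Tendsto (fun ε => R ε x) (nhdsWithin 0 (Set.Ioi 0)) (nhds x))
    (hRadjdom : ∀ ε, 0 < ε → ∀ x : K,
      ContinuousLinearMap.adjoint (R ε) x ∈ D₀.adjoint.domain)
    (hRadjval : ∀ ε (hε : 0 < ε) (x : K),
      D₀.adjoint ⟨ContinuousLinearMap.adjoint (R ε) x, hRadjdom ε hε x⟩
        = ε⁻¹ • (x - ContinuousLinearMap.adjoint (R ε) x))
    (hRadjtendsto : ∀ x : K,
      Tendsto (fun ε => ContinuousLinearMap.adjoint (R ε) x) (nhdsWithin 0 (Set.Ioi 0)) (nhds x))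
    (Mc N Mop : K →L[ℂ] K)
    (hMdom : ∀ u ∈ D₀.domain, Mc u ∈ D₀.domain)
    (hMcomm : ∀ u : D₀.domain, Mc (D₀ u) = D₀ ⟨Mc u, hMdom u u.2⟩ + Mop u)
    (A : K →ₗ.[ℂ] K) (hAdense : Dense (A.domain : Set K)) (hAclosed : A.IsClosed)
    (hARdom : ∀ ε, 0 < ε → ∀ u ∈ A.domain, R ε u ∈ A.domain)
    (hARcomm : ∀ ε (hε : 0 < ε) (u : A.domain),
      A ⟨R ε u, hARdom ε hε u u.2⟩ = R ε (A u))
    (hB0dense : Dense ((D₀.domain ⊓ A.domain : Submodule ℂ K) : Set K))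
    (c : ℝ) (hc : 0 < c)
    (hpos : ∀ (φ : K) (hφ : φ ∈ D₀.domain ⊓ A.domain),
      c * ‖φ‖ ^ 2 ≤ (inner ℂ (B0 D₀ A Mc N hMdom ⟨φ, hφ⟩) φ : ℂ).re)
    (hposadj : ∀ (ψ : K) (hψd : ψ ∈ D₀.adjoint.domain) (hψa : ψ ∈ A.adjoint.domain),
      c * ‖ψ‖ ^ 2 ≤ (inner ℂ (ContinuousLinearMap.adjoint Mc (D₀.adjoint ⟨ψ, hψd⟩)
          + ContinuousLinearMap.adjoint N ψ + A.adjoint ⟨ψ, hψa⟩) ψ : ℂ).re) :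
    (∀ (f : K) (hf : f ∈ (B0 D₀ A Mc N hMdom).adjoint.domain),
      c * ‖f‖ ^ 2 ≤ (inner ℂ ((B0 D₀ A Mc N hMdom).adjoint ⟨f, hf⟩) f : ℂ).re) ∧
    Function.Injective (fun f : (B0 D₀ A Mc N hMdom).adjoint.domain =>
      (B0 D₀ A Mc N hMdom).adjoint f) := by
  classical
  set T : K →ₗ.[ℂ] K := B0 D₀ A Mc N hMdom with hTdef
  have hTadj : ∀ (y : T.adjoint.domain) (x : T.domain),
      (inner ℂ (T.adjoint y) (x : K) : ℂ) = inner ℂ (y : K) (T x) :=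
    LinearPMap.adjoint_isFormalAdjoint hB0dense
  have hDadj : ∀ (y : D₀.adjoint.domain) (x : D₀.domain),
      (inner ℂ (D₀.adjoint y) (x : K) : ℂ) = inner ℂ (y : K) (D₀ x) :=
    LinearPMap.adjoint_isFormalAdjoint hD₀dense
  -- Mc† maps dom D₀† into itself, with commutation relation
  have hMadj_key : ∀ (ψ : D₀.adjoint.domain) (u : D₀.domain),
      (inner ℂ (ContinuousLinearMap.adjoint Mc (D₀.adjoint ψ)
        + ContinuousLinearMap.adjoint Mop (ψ : K)) (u : K) : ℂ)
        = inner ℂ (ContinuousLinearMap.adjoint Mc (ψ : K)) (D₀ u) := by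
    intro ψ u
    have h5 := hMcomm u
    rw [inner_add_left, ContinuousLinearMap.adjoint_inner_left,
      ContinuousLinearMap.adjoint_inner_left, ContinuousLinearMap.adjoint_inner_left, h5,
      inner_add_right]
    have : (inner ℂ (D₀.adjoint ψ) ((⟨Mc u, hMdom u u.2⟩ : D₀.domain) : K) : ℂ)
        = inner ℂ (ψ : K) (D₀ ⟨Mc u, hMdom u u.2⟩) := hDadj ψ _
    rw [← this]
  have hMadj_mem : ∀ (ψ : D₀.adjoint.domain),
      ContinuousLinearMap.adjoint Mc (ψ : K) ∈ D₀.adjoint.domain := by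
    intro ψ
    exact LinearPMap.mem_adjoint_domain_of_exists _ ⟨_, fun u => hMadj_key ψ u⟩
  have hMadj_val : ∀ (ψ : D₀.adjoint.domain),
      D₀.adjoint ⟨ContinuousLinearMap.adjoint Mc (ψ : K), hMadj_mem ψ⟩
        = ContinuousLinearMap.adjoint Mc (D₀.adjoint ψ)
          + ContinuousLinearMap.adjoint Mop (ψ : K) := by
    intro ψ
    exact LinearPMap.adjoint_apply_eq hD₀dense _ (fun u => hMadj_key ψ u)
  -- the adjoint resolvent inverts 1 + ε D₀†
  have hRadjinv : ∀ ε (hε : 0 < ε) (ψ : D₀.adjoint.domain),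
      ContinuousLinearMap.adjoint (R ε) ((ψ : K) + ε • D₀.adjoint ψ) = (ψ : K) := by
    intro ε hε ψ
    apply ext_inner_right ℂ
    intro x
    rw [ContinuousLinearMap.adjoint_inner_left, inner_add_left, inner_real_smul_left]
    have h1 : (inner ℂ (D₀.adjoint ψ) (R ε x) : ℂ)
        = inner ℂ (ψ : K) (D₀ ⟨R ε x, hRdom ε hε x⟩) := hDadj ψ ⟨R ε x, hRdom ε hε x⟩
    rw [h1, hRval ε hε x, inner_real_smul_right, inner_sub_right]
    have hε' : (ε : ℂ) ≠ 0 := by exact_mod_cast hε.ne'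
    field_simp
    simp only [Complex.ofReal_div, Complex.ofReal_one, mul_one_div_cancel hε', one_mul]
    ring
  -- the commutator identity
  have hcomm : ∀ ε (hε : 0 < ε) (f : K),
      ContinuousLinearMap.adjoint Mc (ContinuousLinearMap.adjoint (R ε) f)
        = ContinuousLinearMap.adjoint (R ε) (ContinuousLinearMap.adjoint Mc f)
          + ε • ContinuousLinearMap.adjoint (R ε) (ContinuousLinearMap.adjoint Mop
              (ContinuousLinearMap.adjoint (R ε) f)) := by
    intro ε hε f
    have hψ : ContinuousLinearMap.adjoint (R ε) f ∈ D₀.adjoint.domain := hRadjdom ε hε f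
    have h1 := hRadjinv ε hε ⟨_, hMadj_mem ⟨_, hψ⟩⟩
    rw [hMadj_val ⟨_, hψ⟩] at h1
    simp only [Submodule.coe_mk] at h1
    rw [show D₀.adjoint ⟨ContinuousLinearMap.adjoint (R ε) f, hψ⟩
        = ε⁻¹ • (f - ContinuousLinearMap.adjoint (R ε) f) from hRadjval ε hε f] at h1
    rw [← h1]
    have harg : ContinuousLinearMap.adjoint Mc (ContinuousLinearMap.adjoint (R ε) f) +
        ε • (ContinuousLinearMap.adjoint Mc (ε⁻¹ • (f - ContinuousLinearMap.adjoint (R ε) f)) +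
          ContinuousLinearMap.adjoint Mop (ContinuousLinearMap.adjoint (R ε) f))
        = ContinuousLinearMap.adjoint Mc f + ε • ContinuousLinearMap.adjoint Mop
            (ContinuousLinearMap.adjoint (R ε) f) := by
      rw [ContinuousLinearMap.map_smul_of_tower, smul_add, smul_smul,
        mul_inv_cancel₀ hε.ne', one_smul, map_sub]
      abel
    rw [harg, map_add, ContinuousLinearMap.map_smul_of_tower]
  have main : ∀ (f : K) (hf : f ∈ T.adjoint.domain),
      c * ‖f‖ ^ 2 ≤ (inner ℂ (T.adjoint ⟨f, hf⟩) f : ℂ).re := by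
    intro f hf
    set g : K := T.adjoint ⟨f, hf⟩ with hgdef
    have key : ∀ ε ∈ Set.Ioi (0:ℝ),
        c * ‖ContinuousLinearMap.adjoint (R ε) f‖ ^ 2
          ≤ (inner ℂ (ContinuousLinearMap.adjoint (R ε) g
              - ContinuousLinearMap.adjoint (R ε) (ContinuousLinearMap.adjoint Mop
                  (ContinuousLinearMap.adjoint (R ε) f))
              + (ContinuousLinearMap.adjoint N (ContinuousLinearMap.adjoint (R ε) f)
                  - ContinuousLinearMap.adjoint (R ε) (ContinuousLinearMap.adjoint N f))
              + ContinuousLinearMap.adjoint (R ε) (ContinuousLinearMap.adjoint Mop f))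
              (ContinuousLinearMap.adjoint (R ε) f) : ℂ).re := by
      intro ε hε
      rw [Set.mem_Ioi] at hε
      have hw : ∀ v : A.domain,
          (inner ℂ (ContinuousLinearMap.adjoint (R ε) g
            - ε⁻¹ • ContinuousLinearMap.adjoint Mc f
            + ε⁻¹ • ContinuousLinearMap.adjoint (R ε) (ContinuousLinearMap.adjoint Mc f)
            + ContinuousLinearMap.adjoint (R ε) (ContinuousLinearMap.adjoint Mop f)
            - ContinuousLinearMap.adjoint (R ε) (ContinuousLinearMap.adjoint N f)) (v : K) : ℂ)
            = inner ℂ (ContinuousLinearMap.adjoint (R ε) f) (A v) := by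
        intro v
        have hud : R ε (v : K) ∈ D₀.domain := hRdom ε hε (v : K)
        have hua : R ε (v : K) ∈ A.domain := hARdom ε hε (v : K) v.2
        have hu : R ε (v : K) ∈ D₀.domain ⊓ A.domain := Submodule.mem_inf.mpr ⟨hud, hua⟩
        have h5 := hMcomm ⟨R ε (v : K), hud⟩
        rw [show D₀ ⟨R ε (v:K), hud⟩ = ε⁻¹ • ((v:K) - R ε (v:K)) from hRval ε hε (v:K)] at h5
        have h4 : (T ⟨R ε (v:K), hu⟩ : K)
            = Mc (ε⁻¹ • ((v:K) - R ε (v:K))) - Mop (R ε (v:K)) + N (R ε (v:K))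
              + A ⟨R ε (v:K), hua⟩ := by
          have h6 : (T ⟨R ε (v:K), hu⟩ : K)
              = D₀ ⟨Mc (R ε (v:K)), hMdom _ hud⟩ + N (R ε (v:K)) + A ⟨R ε (v:K), hua⟩ := rfl
          rw [h6, eq_sub_of_add_eq h5.symm]
        have h3 : (inner ℂ g (R ε (v:K)) : ℂ) = inner ℂ f ((T ⟨R ε (v:K), hu⟩ : K)) :=
          hTadj ⟨f, hf⟩ ⟨_, hu⟩
        rw [h4] at h3
        have h2 : (inner ℂ (ContinuousLinearMap.adjoint (R ε) f) (A v) : ℂ)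
            = inner ℂ f ((A ⟨R ε (v:K), hua⟩ : K)) := by
          rw [ContinuousLinearMap.adjoint_inner_left, ← hARcomm ε hε v]
        rw [h2]
        simp only [ContinuousLinearMap.map_smul_of_tower, map_sub, inner_add_right,
          inner_sub_right, inner_real_smul_right] at h3
        simp only [inner_sub_left, inner_add_left, inner_real_smul_left,
          ContinuousLinearMap.adjoint_inner_left]
        push_cast at h3 ⊢
        linear_combination h3
      have hψa : ContinuousLinearMap.adjoint (R ε) f ∈ A.adjoint.domain :=
        LinearPMap.mem_adjoint_domain_of_exists _ ⟨_, hw⟩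
      have hAval : A.adjoint ⟨ContinuousLinearMap.adjoint (R ε) f, hψa⟩
          = ContinuousLinearMap.adjoint (R ε) g
            - ε⁻¹ • ContinuousLinearMap.adjoint Mc f
            + ε⁻¹ • ContinuousLinearMap.adjoint (R ε) (ContinuousLinearMap.adjoint Mc f)
            + ContinuousLinearMap.adjoint (R ε) (ContinuousLinearMap.adjoint Mop f)
            - ContinuousLinearMap.adjoint (R ε) (ContinuousLinearMap.adjoint N f) :=
        LinearPMap.adjoint_apply_eq hAdense _ hw
      have hineq := hposadj (ContinuousLinearMap.adjoint (R ε) f) (hRadjdom ε hε f) hψa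
      rw [hAval, hRadjval ε hε f] at hineq
      have hvec : ContinuousLinearMap.adjoint Mc
            (ε⁻¹ • (f - ContinuousLinearMap.adjoint (R ε) f))
          + ContinuousLinearMap.adjoint N (ContinuousLinearMap.adjoint (R ε) f)
          + (ContinuousLinearMap.adjoint (R ε) g
            - ε⁻¹ • ContinuousLinearMap.adjoint Mc f
            + ε⁻¹ • ContinuousLinearMap.adjoint (R ε) (ContinuousLinearMap.adjoint Mc f)
            + ContinuousLinearMap.adjoint (R ε) (ContinuousLinearMap.adjoint Mop f)
            - ContinuousLinearMap.adjoint (R ε) (ContinuousLinearMap.adjoint N f))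
          = ContinuousLinearMap.adjoint (R ε) g
              - ContinuousLinearMap.adjoint (R ε) (ContinuousLinearMap.adjoint Mop
                  (ContinuousLinearMap.adjoint (R ε) f))
              + (ContinuousLinearMap.adjoint N (ContinuousLinearMap.adjoint (R ε) f)
                  - ContinuousLinearMap.adjoint (R ε) (ContinuousLinearMap.adjoint N f))
              + ContinuousLinearMap.adjoint (R ε) (ContinuousLinearMap.adjoint Mop f) := by
        rw [ContinuousLinearMap.map_smul_of_tower, map_sub, hcomm ε hε f,
          smul_sub, smul_add, smul_smul, inv_mul_cancel₀ hε.ne', one_smul]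
        abel
      rw [hvec] at hineq
      exact hineq
    -- pass to the limit ε → 0⁺
    have hψtend : Tendsto (fun ε => ContinuousLinearMap.adjoint (R ε) f)
        (nhdsWithin 0 (Set.Ioi 0)) (nhds f) := hRadjtendsto f
    have hnorm : Tendsto (fun ε => c * ‖ContinuousLinearMap.adjoint (R ε) f‖ ^ 2)
        (nhdsWithin 0 (Set.Ioi 0)) (nhds (c * ‖f‖ ^ 2)) :=
      (hψtend.norm.pow 2).const_mul c
    have t2zero : Tendsto (fun ε => ContinuousLinearMap.adjoint (R ε)
          (ContinuousLinearMap.adjoint Mop (ContinuousLinearMap.adjoint (R ε) f))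
        - ContinuousLinearMap.adjoint (R ε) (ContinuousLinearMap.adjoint Mop f))
        (nhdsWithin 0 (Set.Ioi 0)) (nhds 0) := by
      apply squeeze_zero_norm' (a := fun ε => ‖ContinuousLinearMap.adjoint Mop‖
        * ‖ContinuousLinearMap.adjoint (R ε) f - f‖)
      · filter_upwards [eventually_mem_nhdsWithin] with ε hε
        rw [Set.mem_Ioi] at hε
        calc ‖ContinuousLinearMap.adjoint (R ε)
              (ContinuousLinearMap.adjoint Mop (ContinuousLinearMap.adjoint (R ε) f))
            - ContinuousLinearMap.adjoint (R ε) (ContinuousLinearMap.adjoint Mop f)‖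
            = ‖ContinuousLinearMap.adjoint (R ε) (ContinuousLinearMap.adjoint Mop
                (ContinuousLinearMap.adjoint (R ε) f - f))‖ := by rw [map_sub, map_sub]
          _ ≤ ‖ContinuousLinearMap.adjoint (R ε)‖ * ‖ContinuousLinearMap.adjoint Mop
                (ContinuousLinearMap.adjoint (R ε) f - f)‖ :=
              ContinuousLinearMap.le_opNorm _ _
          _ ≤ 1 * ‖ContinuousLinearMap.adjoint Mop
                (ContinuousLinearMap.adjoint (R ε) f - f)‖ := by
              gcongr
              rw [LinearIsometryEquiv.norm_map]
              exact hRnorm ε hε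
          _ = ‖ContinuousLinearMap.adjoint Mop
                (ContinuousLinearMap.adjoint (R ε) f - f)‖ := one_mul _
          _ ≤ ‖ContinuousLinearMap.adjoint Mop‖ * ‖ContinuousLinearMap.adjoint (R ε) f - f‖ :=
              ContinuousLinearMap.le_opNorm _ _
      · have h0 : Tendsto (fun ε => ContinuousLinearMap.adjoint (R ε) f - f)
            (nhdsWithin 0 (Set.Ioi 0)) (nhds 0) := by
          simpa using hψtend.sub (tendsto_const_nhds :
            Tendsto (fun _ : ℝ => f) (nhdsWithin 0 (Set.Ioi 0)) (nhds f))
        simpa using h0.norm.const_mul ‖ContinuousLinearMap.adjoint Mop‖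
    have t2 : Tendsto (fun ε => ContinuousLinearMap.adjoint (R ε)
          (ContinuousLinearMap.adjoint Mop (ContinuousLinearMap.adjoint (R ε) f)))
        (nhdsWithin 0 (Set.Ioi 0))
        (nhds (ContinuousLinearMap.adjoint Mop f)) := by
      have := t2zero.add (hRadjtendsto (ContinuousLinearMap.adjoint Mop f))
      simpa using this
    have t3a : Tendsto (fun ε => ContinuousLinearMap.adjoint N
          (ContinuousLinearMap.adjoint (R ε) f)) (nhdsWithin 0 (Set.Ioi 0))
        (nhds (ContinuousLinearMap.adjoint N f)) :=
      ((ContinuousLinearMap.adjoint N).continuous.tendsto f).comp hψtend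
    have hStend : Tendsto (fun ε => ContinuousLinearMap.adjoint (R ε) g
        - ContinuousLinearMap.adjoint (R ε) (ContinuousLinearMap.adjoint Mop
            (ContinuousLinearMap.adjoint (R ε) f))
        + (ContinuousLinearMap.adjoint N (ContinuousLinearMap.adjoint (R ε) f)
            - ContinuousLinearMap.adjoint (R ε) (ContinuousLinearMap.adjoint N f))
        + ContinuousLinearMap.adjoint (R ε) (ContinuousLinearMap.adjoint Mop f))
        (nhdsWithin 0 (Set.Ioi 0)) (nhds g) := by
      have := (((hRadjtendsto g).sub t2).add
        (t3a.sub (hRadjtendsto (ContinuousLinearMap.adjoint N f)))).add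
        (hRadjtendsto (ContinuousLinearMap.adjoint Mop f))
      simpa using this
    have hinner : Tendsto (fun ε => (inner ℂ (ContinuousLinearMap.adjoint (R ε) g
        - ContinuousLinearMap.adjoint (R ε) (ContinuousLinearMap.adjoint Mop
            (ContinuousLinearMap.adjoint (R ε) f))
        + (ContinuousLinearMap.adjoint N (ContinuousLinearMap.adjoint (R ε) f)
            - ContinuousLinearMap.adjoint (R ε) (ContinuousLinearMap.adjoint N f))
        + ContinuousLinearMap.adjoint (R ε) (ContinuousLinearMap.adjoint Mop f))
        (ContinuousLinearMap.adjoint (R ε) f) : ℂ).re)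
        (nhdsWithin 0 (Set.Ioi 0)) (nhds ((inner ℂ g f : ℂ).re)) :=
      (Complex.continuous_re.tendsto _).comp (hStend.inner hψtend)
    exact le_of_tendsto_of_tendsto hnorm hinner
      (by filter_upwards [eventually_mem_nhdsWithin] with ε hε using key ε hε)
  refine ⟨main, ?_⟩
  intro f1 f2 h
  simp only at h
  have hd : T.adjoint (f1 - f2) = 0 := by
    have : T.adjoint (f1 - f2) = T.adjoint f1 - T.adjoint f2 :=
      LinearMap.map_sub T.adjoint.toFun f1 f2
    rw [this, h, sub_self]
  have h2 := main ((f1 - f2 : T.adjoint.domain) : K) (f1 - f2).2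
  rw [show ((⟨((f1 - f2 : T.adjoint.domain) : K), (f1 - f2).2⟩ : T.adjoint.domain))
      = f1 - f2 from rfl, hd] at h2
  simp only [inner_zero_left, Complex.zero_re] at h2
  have hnn : (0:ℝ) ≤ ‖((f1 - f2 : T.adjoint.domain) : K)‖ ^ 2 := by positivity
  have hz : ‖((f1 - f2 : T.adjoint.domain) : K)‖ ^ 2 = 0 := by nlinarith
  have : ((f1 - f2 : T.adjoint.domain) : K) = 0 := by
    rw [pow_eq_zero_iff (two_ne_zero)] at hz
    exact norm_eq_zero.mp hz
  have : f1 - f2 = 0 := Subtype.ext this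
  exact sub_eq_zero.mp this
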